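/- Let γ > 0, C ≥ 0, and R > 0 be constants given a priori, and let 𝒟 be a domain space over ℝⁿ in which every domain satisfies the Disjoint Supports Assumption, diam(supp(D_in)) < R, and either every domain's ID distribution has a (γ,C)-Hölder continuous density with respect to Lebesgue measure, or every domain's OOD distribution has a (γ,C)-Hölder continuous density with respect to Lebesgue measure. Then for any α ∈ (0,1), OOD detection is uniformly learnable for 𝒟 in 𝒫(ℝⁿ). -/

import Mathlib

set_option maxHeartbeats 1000000


open MeasureTheory ENNReal Set Filter

noncomputable section

/-- A domain over an instance space `X` is a pair of (Borel) measures on `X`: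
the ID distribution and the OOD distribution. -/
structure Domain (X : Type*) [MeasurableSpace X] where
  inD : Measure X
  outD : Measure X

namespace Domain

variable {X : Type*} [MeasurableSpace X]

/-- Both components of the domain are probability measures. -/
def IsProb (D : Domain X) : Prop :=
  IsProbabilityMeasure D.inD ∧ IsProbabilityMeasure D.outD

/-- The risk `R^α_D(h) = (1−α)·D_in(X∖h) + α·D_out(h)` of a hypothesis `h ⊆ X`. -/
def risk (D : Domain X) (α : ℝ) (h : Set X) : ℝ≥0∞ :=
  ENNReal.ofReal (1 - α) * D.inD hᶜ + ENNReal.ofReal α * D.outD h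

/-- The ID risk `R^in_D(h) = D_in(X∖h)`. -/
def inRisk (D : Domain X) (h : Set X) : ℝ≥0∞ := D.inD hᶜ

/-- The OOD risk `R^out_D(h) = D_out(h)`. -/
def outRisk (D : Domain X) (h : Set X) : ℝ≥0∞ := D.outD h

end Domain

/-- The distribution of `N` i.i.d. samples from `μ`. -/
def iidSamples {X : Type*} [MeasurableSpace X] (μ : Measure X) (N : ℕ) :
    Measure (Fin N → X) :=
  Measure.pi fun _ => μ

/-- A (deterministic) learning algorithm: given accuracy `ε`, confidence `δ`, a sample size
and a tuple of samples, it outputs a hypothesis. -/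
abbrev Learner (X : Type*) : Type _ := ℝ → ℝ → (n : ℕ) → (Fin n → X) → Set X

/-- Uniform learnability of OOD detection for the domain space `𝒟` in the hypothesis space `H`,
with a priori known OOD probability `α`: there are a sample-complexity function `N(ε,δ)` and a
learner which, for every `ε, δ ∈ (0,1/2)` and every domain `D ∈ 𝒟`, given `N(ε,δ)` i.i.d.
samples from `D_in`, outputs with probability at least `1−δ` a hypothesis in `H` whose risk is
within `ε` of the best risk achievable in `H`. -/
def UniformlyLearnable {X : Type*} [MeasurableSpace X]
    (𝒟 : Set (Domain X)) (H : Set (Set X)) (α : ℝ) : Prop :=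
  ∃ (N : ℝ → ℝ → ℕ) (A : Learner X),
    (∀ ε δ n S, A ε δ n S ∈ H) ∧
    ∀ ε δ : ℝ, 0 < ε → ε < 1/2 → 0 < δ → δ < 1/2 →
      ∀ D ∈ 𝒟,
        ENNReal.ofReal (1 - δ) ≤
          iidSamples D.inD (N ε δ)
            {S | D.risk α (A ε δ (N ε δ) S) ≤ (⨅ h' ∈ H, D.risk α h') + ENNReal.ofReal ε}

/-- Non-uniform learnability of OOD detection: as in `UniformlyLearnable`, except that the
number of samples the learner needs may depend on the domain `D ∈ 𝒟`. -/
def NonUniformlyLearnable {X : Type*} [MeasurableSpace X]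
    (𝒟 : Set (Domain X)) (H : Set (Set X)) (α : ℝ) : Prop :=
  ∃ A : Learner X,
    (∀ ε δ n S, A ε δ n S ∈ H) ∧
    ∀ ε δ : ℝ, 0 < ε → ε < 1/2 → 0 < δ → δ < 1/2 →
      ∀ D ∈ 𝒟, ∃ N : ℕ,
        ENNReal.ofReal (1 - δ) ≤
          iidSamples D.inD N
            {S | D.risk α (A ε δ N S) ≤ (⨅ h' ∈ H, D.risk α h') + ENNReal.ofReal ε}

/-- The support of a measure on a topological space: the set of points all of whose open
neighbourhoods have positive measure. -/
def msupport {X : Type*} [MeasurableSpace X] [TopologicalSpace X] (μ : Measure X) : Set X :=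
  {x | ∀ U : Set X, IsOpen U → x ∈ U → 0 < μ U}

/-- The Disjoint Supports Assumption. -/
def Domain.DSA {X : Type*} [MeasurableSpace X] [TopologicalSpace X] (D : Domain X) : Prop :=
  msupport D.inD ∩ msupport D.outD = ∅

/-- The instance space `ℝⁿ`. -/
abbrev Euc (n : ℕ) : Type := EuclideanSpace ℝ (Fin n)

/-- The (extended) distance between two sets. -/
def setEDist {X : Type*} [PseudoEMetricSpace X] (A B : Set X) : ℝ≥0∞ :=
  ⨅ x ∈ A, EMetric.infEdist x B

/-- The `τ`-Far Supports Assumption: the supports of the ID and OOD distributions are at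
distance more than `τ`. -/
def Domain.FSA {n : ℕ} (D : Domain (Euc n)) (τ : ℝ) : Prop :=
  ENNReal.ofReal τ < setEDist (msupport D.inD) (msupport D.outD)

/-- The Bounded ID Support Assumption: the support of the ID distribution has diameter
less than `R`. -/
def Domain.BoundedID {n : ℕ} (D : Domain (Euc n)) (R : ℝ) : Prop :=
  EMetric.diam (msupport D.inD) < ENNReal.ofReal R

/-- `μ` has a `(γ, C)`-Hölder continuous density with respect to Lebesgue measure on `ℝⁿ`. -/
def HolderDensity {n : ℕ} (γ C : ℝ) (μ : Measure (Euc n)) : Prop :=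
  ∃ f : Euc n → ℝ, (∀ x, 0 ≤ f x) ∧
    (∀ x y, |f x - f y| ≤ C * ‖x - y‖ ^ γ) ∧
    μ = MeasureTheory.volume.withDensity fun x => ENNReal.ofReal (f x)



section AuxOOD
open Metric

variable {n N : ℕ}

lemma isClosed_msupport {X : Type*} [MeasurableSpace X] [TopologicalSpace X] (μ : Measure X) :
    IsClosed (msupport μ) := by
  rw [← isOpen_compl_iff]
  rw [isOpen_iff_mem_nhds]
  intro x hx
  simp only [msupport, mem_compl_iff, mem_setOf_eq, not_forall] at hx
  obtain ⟨U, hU, hxU, hμU⟩ := hx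
  refine Filter.mem_of_superset (hU.mem_nhds hxU) ?_
  intro y hy h
  exact absurd (h U hU hy) hμU

lemma measure_compl_msupport {X : Type*} [MeasurableSpace X] [TopologicalSpace X]
    [SecondCountableTopology X] (μ : Measure X) :
    μ (msupport μ)ᶜ = 0 := by
  have hset : (msupport μ)ᶜ = ⋃₀ {U : Set X | IsOpen U ∧ μ U = 0} := by
    ext x
    simp only [mem_compl_iff, msupport, mem_setOf_eq, not_forall, mem_sUnion]
    constructor
    · rintro ⟨U, hU, hxU, hμU⟩
      exact ⟨U, ⟨hU, by simpa using (nonpos_iff_eq_zero.mp (not_lt.mp hμU))⟩, hxU⟩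
    · rintro ⟨U, ⟨hU, hμU⟩, hxU⟩
      exact ⟨U, hU, hxU, by simp [hμU]⟩
  obtain ⟨T, hTc, hTsub, hTeq⟩ := TopologicalSpace.isOpen_sUnion_countable
    {U : Set X | IsOpen U ∧ μ U = 0} (fun s hs => hs.1)
  rw [hset, ← hTeq]
  exact (measure_sUnion_null_iff hTc).mpr (fun s hs => (hTsub hs).2)

lemma holder_continuous {n : ℕ} {γ C : ℝ} (hγ : 0 < γ) (hC : 0 ≤ C)
    {f : Euc n → ℝ} (hf : ∀ x y, |f x - f y| ≤ C * ‖x - y‖ ^ γ) : Continuous f := by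
  rw [Metric.continuous_iff]
  intro x ε hε
  refine ⟨(ε / (C + 1)) ^ (1 / γ), Real.rpow_pos_of_pos (by positivity) _, fun y hy => ?_⟩
  have h1 : dist (f y) (f x) ≤ C * ‖y - x‖ ^ γ := by
    rw [Real.dist_eq]; exact hf y x
  have h2 : ‖y - x‖ ^ γ < ε / (C + 1) := by
    have hnn : (0:ℝ) ≤ ‖y - x‖ := norm_nonneg _
    have h3 : ‖y - x‖ ^ γ < ((ε / (C + 1)) ^ (1 / γ)) ^ γ := by
      rw [← dist_eq_norm]
      exact Real.rpow_lt_rpow dist_nonneg hy hγ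
    rwa [← Real.rpow_mul (by positivity), one_div,
      inv_mul_cancel₀ hγ.ne', Real.rpow_one] at h3
  calc dist (f y) (f x) ≤ C * ‖y - x‖ ^ γ := h1
    _ ≤ C * (ε / (C + 1)) := by
        refine mul_le_mul_of_nonneg_left h2.le hC
    _ < ε := by
        rw [mul_div_assoc']
        rw [div_lt_iff₀ (by positivity)]
        nlinarith

lemma density_zero_on_open {n : ℕ} {f : Euc n → ℝ} (hf0 : ∀ x, 0 ≤ f x) (hcont : Continuous f)
    {U : Set (Euc n)} (hU : IsOpen U)
    (hnull : (MeasureTheory.volume.withDensity fun x => ENNReal.ofReal (f x)) U = 0) :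
    ∀ x ∈ U, f x = 0 := by
  intro x hxU
  by_contra hne
  have hfx : 0 < f x := lt_of_le_of_ne (hf0 x) (Ne.symm hne)
  set V : Set (Euc n) := U ∩ f ⁻¹' Ioi (f x / 2) with hV
  have hVopen : IsOpen V := hU.inter (isOpen_Ioi.preimage hcont)
  have hxV : x ∈ V := ⟨hxU, by simp; linarith⟩
  have hVpos : 0 < volume V := hVopen.measure_pos volume ⟨x, hxV⟩
  have hle : ENNReal.ofReal (f x / 2) * volume V ≤
      (MeasureTheory.volume.withDensity fun x => ENNReal.ofReal (f x)) V := by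
    rw [withDensity_apply _ hVopen.measurableSet]
    calc ENNReal.ofReal (f x / 2) * volume V
        = ∫⁻ _ in V, ENNReal.ofReal (f x / 2) ∂volume := by
          rw [setLIntegral_const]
      _ ≤ ∫⁻ y in V, ENNReal.ofReal (f y) ∂volume := by
          refine setLIntegral_mono (ENNReal.measurable_ofReal.comp hcont.measurable) (fun y hy => ?_)
          exact ENNReal.ofReal_le_ofReal (le_of_lt hy.2)
  have hzero : (MeasureTheory.volume.withDensity fun x => ENNReal.ofReal (f x)) V = 0 :=
    measure_mono_null inter_subset_left hnull
  rw [hzero, nonpos_iff_eq_zero, mul_eq_zero] at hle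
  rcases hle with h | h
  · rw [ENNReal.ofReal_eq_zero] at h; linarith
  · exact hVpos.ne' h

lemma aux_q_bound {q : ℝ} (h0 : 0 ≤ q) (h1 : q ≤ 1) {N : ℕ} (hN : 1 ≤ N) :
    q * (1 - q) ^ N ≤ 1 / N := by
  have hNpos : (0:ℝ) < N := by exact_mod_cast hN
  have hb : (1 - q) ^ N ≤ 1 / (1 + N * q) := by
    have h2 : (1 - q) ^ N * (1 + q) ^ N ≤ 1 := by
      rw [← mul_pow]
      have : (1 - q) * (1 + q) = 1 - q ^ 2 := by ring
      rw [this]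
      refine pow_le_one₀ (by nlinarith) (by nlinarith)
    have h3 : 1 + (N:ℝ) * q ≤ (1 + q) ^ N := by
      have := one_add_mul_le_pow (a := q) (by linarith) N
      linarith
    have h4 : (0:ℝ) < (1 + q) ^ N := by positivity
    rw [le_div_iff₀ (by nlinarith)]
    calc (1 - q) ^ N * (1 + N * q) ≤ (1 - q) ^ N * (1 + q) ^ N := by
          refine mul_le_mul_of_nonneg_left h3 (pow_nonneg (by linarith) N)
      _ ≤ 1 := h2
  calc q * (1 - q) ^ N ≤ q * (1 / (1 + N * q)) :=
        mul_le_mul_of_nonneg_left hb h0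
    _ ≤ 1 / N := by
        rw [mul_one_div, div_le_div_iff₀ (by nlinarith) hNpos]
        nlinarith

lemma iid_cylinder {X : Type*} [MeasurableSpace X] (μ : Measure X) [IsProbabilityMeasure μ]
    (N : ℕ) {A : Set X} (hA : MeasurableSet A) :
    iidSamples μ N {S | ∀ i, S i ∈ A} = μ A ^ N := by
  have h : {S : Fin N → X | ∀ i, S i ∈ A} = Set.pi univ fun _ => A := by
    ext S; simp [Set.mem_pi]
  rw [h, iidSamples, Measure.pi_pi]
  simp [Finset.prod_const]

lemma iid_map_eval {X : Type*} [MeasurableSpace X] (μ : Measure X) [IsProbabilityMeasure μ]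
    (N : ℕ) (i : Fin N) :
    (iidSamples μ N).map (fun S => S i) = μ := by
  ext s hs
  rw [Measure.map_apply (measurable_pi_apply i) hs]
  have h : (fun S : Fin N → X => S i) ⁻¹' s =
      Set.pi univ (Function.update (fun _ => univ) i s) := by
    ext S
    simp only [mem_preimage, Set.mem_pi, mem_univ, forall_true_left]
    constructor
    · intro hSi j
      by_cases hj : j = i
      · subst hj; simpa using hSi
      · simp [Function.update_of_ne hj]
    · intro hall
      have := hall i
      simpa using this
  rw [h, iidSamples, Measure.pi_pi]
  rw [Finset.prod_eq_single i (fun b _ hb => by simp [Function.update_of_ne hb]) (by simp)]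
  simp

lemma iid_lintegral_eval {X : Type*} [MeasurableSpace X] (μ : Measure X)
    [IsProbabilityMeasure μ] (N : ℕ) (i : Fin N) {k : X → ℝ≥0∞} (hk : Measurable k) :
    ∫⁻ S, k (S i) ∂(iidSamples μ N) = ∫⁻ x, k x ∂μ := by
  have h := lintegral_map (μ := iidSamples μ N) hk (measurable_pi_apply i)
  rw [iid_map_eval] at h
  exact h.symm

lemma lintegral_biUnion_finset_le {X ι : Type*} [MeasurableSpace X] (μ : Measure X)
    (g : X → ℝ≥0∞) (T : Finset ι) (A : ι → Set X) :
    ∫⁻ x in (⋃ t ∈ T, A t), g x ∂μ ≤ ∑ t ∈ T, ∫⁻ x in A t, g x ∂μ := by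
  classical
  induction T using Finset.induction with
  | empty => simp
  | insert a T' hnotmem ih =>
    rw [Finset.set_biUnion_insert, Finset.sum_insert hnotmem]
    calc ∫⁻ x in A a ∪ ⋃ t ∈ T', A t, g x ∂μ
        ≤ ∫⁻ x in A a, g x ∂μ + ∫⁻ x in ⋃ t ∈ T', A t, g x ∂μ := by
          rw [← lintegral_add_measure]
          exact lintegral_mono' (Measure.restrict_union_le _ _) le_rfl
      _ ≤ _ := add_le_add_right ih _

lemma card_separated_le {n : ℕ} {K : Set (Euc n)} {R r : ℝ} (hR : 0 < R) (hr : 0 < r)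
    (hrR : r ≤ R) (hK : ∀ x ∈ K, ∀ y ∈ K, dist x y < R)
    (T : Finset (Euc n)) (hTK : ↑T ⊆ K)
    (hsep : ∀ x ∈ T, ∀ y ∈ T, x ≠ y → r / 2 ≤ dist x y) :
    (T.card : ℝ) ≤ (9 * R / r) ^ n := by
  rcases T.eq_empty_or_nonempty with rfl | ⟨c, hc⟩
  · simp only [Finset.card_empty, Nat.cast_zero]
    positivity
  · -- packing argument
    have hdisj : (↑T : Set (Euc n)).PairwiseDisjoint
        (fun t => Metric.closedBall t (r / 8)) := by
      intro a ha b hb hab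
      refine Metric.closedBall_disjoint_closedBall ?_
      have := hsep a ha b hb hab
      linarith
    have hsub : ∀ t ∈ T, Metric.closedBall t (r / 8) ⊆
        Metric.closedBall c (R + r / 8) := by
      intro t ht z hz
      simp only [Metric.mem_closedBall] at hz ⊢
      have hd : dist t c < R := hK t (hTK ht) c (hTK hc)
      calc dist z c ≤ dist z t + dist t c := dist_triangle _ _ _
        _ ≤ R + r / 8 := by linarith
    have hmeas := measure_biUnion_finset (μ := volume) hdisj
      (fun t _ => measurableSet_closedBall (x := t) (ε := r / 8))
    have hle : ∑ t ∈ T, volume (Metric.closedBall t (r / 8)) ≤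
        volume (Metric.closedBall c (R + r / 8)) := by
      rw [← hmeas]
      exact measure_mono (Set.iUnion₂_subset hsub)
    have hballvol : ∀ (z : Euc n) (s : ℝ), 0 ≤ s → volume (Metric.closedBall z s) =
        ENNReal.ofReal (s ^ n) * volume (Metric.ball (0 : Euc n) 1) := by
      intro z s hs
      rw [MeasureTheory.Measure.addHaar_closedBall volume z hs]
      congr 2
      simp [finrank_euclideanSpace]
    rw [Finset.sum_congr rfl (fun t _ => hballvol t (r/8) (by positivity)),
      Finset.sum_const, hballvol c (R + r/8) (by positivity)] at hle
    set vb := volume (Metric.ball (0 : Euc n) 1) with hvb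
    have hvb0 : vb ≠ 0 := (Metric.measure_ball_pos volume _ one_pos).ne'
    have hvbt : vb ≠ ⊤ := measure_ball_lt_top.ne
    have hle2 : ENNReal.ofReal ((T.card : ℝ) * (r / 8) ^ n) * vb ≤
        ENNReal.ofReal ((R + r / 8) ^ n) * vb := by
      calc ENNReal.ofReal ((T.card : ℝ) * (r / 8) ^ n) * vb
          = (T.card : ℝ≥0∞) * (ENNReal.ofReal ((r / 8) ^ n) * vb) := by
            rw [ENNReal.ofReal_mul (by positivity), ENNReal.ofReal_natCast, mul_assoc]
        _ = T.card • (ENNReal.ofReal ((r / 8) ^ n) * vb) := by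
            rw [nsmul_eq_mul]
        _ ≤ _ := hle
    have hre : (T.card : ℝ) * (r / 8) ^ n ≤ (R + r / 8) ^ n := by
      have := (ENNReal.mul_le_mul_iff_left hvb0 hvbt).mp hle2
      rwa [ENNReal.ofReal_le_ofReal_iff (by positivity)] at this
    have h9 : (R + r / 8) ^ n ≤ (9 * R / 8) ^ n := by
      refine pow_le_pow_left₀ (by positivity) (by linarith) n
    rw [div_pow] at hre ⊢
    rw [le_div_iff₀ (by positivity)]
    calc (T.card : ℝ) * r ^ n = ((T.card : ℝ) * (r ^ n / 8 ^ n)) * 8 ^ n := by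
          field_simp
      _ ≤ (9 * R / 8) ^ n * 8 ^ n := by
          refine mul_le_mul_of_nonneg_right (hre.trans h9) (by positivity)
      _ = (9 * R) ^ n := by
          rw [div_pow]; field_simp

lemma exists_net {n : ℕ} {K : Set (Euc n)} {R r : ℝ} (hR : 0 < R) (hr : 0 < r)
    (hrR : r ≤ R) (hK : ∀ x ∈ K, ∀ y ∈ K, dist x y < R) :
    ∃ T : Finset (Euc n), ↑T ⊆ K ∧ (K ⊆ ⋃ t ∈ T, Metric.ball t (r / 2)) ∧
      (T.card : ℝ) ≤ (9 * R / r) ^ n := by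
  classical
  set P : ℕ → Prop := fun k => ∃ T : Finset (Euc n), ↑T ⊆ K ∧
    (∀ x ∈ T, ∀ y ∈ T, x ≠ y → r / 2 ≤ dist x y) ∧ T.card = k with hP
  have hbound : ∀ k, P k → (k : ℝ) ≤ (9 * R / r) ^ n := by
    rintro k ⟨T, hTK, hsep, rfl⟩
    exact card_separated_le hR hr hrR hK T hTK hsep
  have hboundN : ∀ k, P k → k ≤ ⌊(9 * R / r) ^ n⌋₊ := fun k hk =>
    Nat.le_floor (hbound k hk)
  set m₀ : ℕ := ⌊(9 * R / r) ^ n⌋₊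
  have hP0 : P 0 := ⟨∅, by simp, by simp, by simp⟩
  have hPmax : P (Nat.findGreatest P m₀) := Nat.findGreatest_spec (Nat.zero_le _) hP0
  obtain ⟨T, hTK, hsep, hcard⟩ := hPmax
  refine ⟨T, hTK, ?_, hbound T.card ⟨T, hTK, hsep, rfl⟩⟩
  by_contra hcover
  rw [Set.not_subset] at hcover
  obtain ⟨x, hxK, hxout⟩ := hcover
  have hdists : ∀ t ∈ T, r / 2 ≤ dist x t := by
    intro t ht
    by_contra hlt
    exact hxout (Set.mem_biUnion ht (by simpa [Metric.mem_ball] using not_le.mp hlt))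
  have hxT : x ∉ T := by
    intro hxT
    have := hdists x hxT
    simp only [dist_self] at this
    linarith
  have hnew : P (T.card + 1) := by
    refine ⟨insert x T, ?_, ?_, ?_⟩
    · rw [Finset.coe_insert]
      exact Set.insert_subset hxK hTK
    · intro a ha b hb hab
      rcases Finset.mem_insert.mp ha with rfl | ha' <;>
        rcases Finset.mem_insert.mp hb with rfl | hb'
      · exact absurd rfl hab
      · exact hdists b hb'
      · rw [dist_comm]; exact hdists a ha'
      · exact hsep a ha' b hb' hab
    · rw [Finset.card_insert_of_notMem hxT]
  have hgt : Nat.findGreatest P m₀ < T.card + 1 := by omega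
  exact Nat.findGreatest_is_greatest hgt (hboundN _ hnew) hnew

lemma measurable_missW {r : ℝ} :
    MeasurableSet {p : (Fin N → Euc n) × Euc n | ∀ i, r < dist p.2 (p.1 i)} := by
  have h : {p : (Fin N → Euc n) × Euc n | ∀ i, r < dist p.2 (p.1 i)} =
      ⋂ i, {p : (Fin N → Euc n) × Euc n | r < dist p.2 (p.1 i)} := by
    ext p; simp
  rw [h]
  exact MeasurableSet.iInter fun i => measurableSet_lt measurable_const
    (Measurable.dist measurable_snd ((measurable_pi_apply i).comp measurable_fst))

lemma compl_union_balls (S : Fin N → Euc n) (r : ℝ) :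
    (⋃ i, Metric.closedBall (S i) r)ᶜ = {x : Euc n | ∀ i, r < dist x (S i)} := by
  ext x
  simp [Metric.mem_closedBall, not_le]


lemma missfun_eq (μ : Measure (Euc n)) (r : ℝ) (S : Fin N → Euc n) :
    μ ((⋃ i, Metric.closedBall (S i) r)ᶜ) =
      ∫⁻ x, ({p : (Fin N → Euc n) × Euc n | ∀ i, r < dist p.2 (p.1 i)}).indicator 1 (S, x) ∂μ := by
  have h1 : (fun x : Euc n =>
      ({p : (Fin N → Euc n) × Euc n | ∀ i, r < dist p.2 (p.1 i)}).indicator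
        (1 : ((Fin N → Euc n) × Euc n) → ℝ≥0∞) (S, x)) =
      fun x => ((⋃ i, Metric.closedBall (S i) r)ᶜ).indicator (1 : Euc n → ℝ≥0∞) x := by
    funext x
    by_cases h : ∀ i, r < dist x (S i)
    · rw [Set.indicator_of_mem (by exact h), Set.indicator_of_mem (by rw [compl_union_balls]; exact h)]
      rfl
    · rw [Set.indicator_of_notMem (by exact h), Set.indicator_of_notMem (by rw [compl_union_balls]; exact h)]
  rw [h1, lintegral_indicator ((MeasurableSet.iUnion fun i => measurableSet_closedBall).compl)]
  simp

lemma measurable_miss (μ : Measure (Euc n)) [SFinite μ] (r : ℝ) :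
    Measurable fun S : Fin N → Euc n => μ ((⋃ i, Metric.closedBall (S i) r)ᶜ) := by
  have h : (fun S : Fin N → Euc n => μ ((⋃ i, Metric.closedBall (S i) r)ᶜ)) =
      fun S => ∫⁻ x, ({p : (Fin N → Euc n) × Euc n | ∀ i, r < dist p.2 (p.1 i)}).indicator 1 (S, x) ∂μ := by
    funext S; exact missfun_eq μ r S
  rw [h]
  exact Measurable.lintegral_prod_right' (measurable_one.indicator measurable_missW)

lemma lintegral_miss_le (μ : Measure (Euc n)) [IsProbabilityMeasure μ] {r : ℝ}
    (hr : 0 < r) (hN : 1 ≤ N) (T : Finset (Euc n))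
    (hcov : msupport μ ⊆ ⋃ t ∈ T, Metric.ball t (r / 2)) :
    ∫⁻ S, μ ((⋃ i, Metric.closedBall (S i) r)ᶜ) ∂(iidSamples μ N) ≤
      ENNReal.ofReal (T.card * (1 / N)) := by
  haveI : IsProbabilityMeasure (iidSamples μ N) := by
    unfold iidSamples; infer_instance
  set W : Set ((Fin N → Euc n) × Euc n) :=
    {p | ∀ i, r < dist p.2 (p.1 i)} with hW
  have hswap : ∫⁻ S, μ ((⋃ i, Metric.closedBall (S i) r)ᶜ) ∂(iidSamples μ N) =
      ∫⁻ x, ∫⁻ S, W.indicator 1 (S, x) ∂(iidSamples μ N) ∂μ := by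
    rw [show (fun S : Fin N → Euc n => μ ((⋃ i, Metric.closedBall (S i) r)ᶜ)) =
      fun S => ∫⁻ x, W.indicator 1 (S, x) ∂μ from funext fun S => missfun_eq μ r S]
    exact lintegral_lintegral_swap (measurable_one.indicator measurable_missW).aemeasurable
  have hinner : ∀ x : Euc n, ∫⁻ S, W.indicator 1 (S, x) ∂(iidSamples μ N) =
      (1 - μ (Metric.closedBall x r)) ^ N := by
    intro x
    have h1 : (fun S : Fin N → Euc n =>
        W.indicator (1 : ((Fin N → Euc n) × Euc n) → ℝ≥0∞) (S, x)) =
        fun S => ({S : Fin N → Euc n | ∀ i, S i ∈ (Metric.closedBall x r)ᶜ}).indicator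
          (1 : (Fin N → Euc n) → ℝ≥0∞) S := by
      funext S
      have hiff : ((S, x) ∈ W) ↔ (S ∈ {S : Fin N → Euc n | ∀ i, S i ∈ (Metric.closedBall x r)ᶜ}) := by
        simp only [hW, mem_setOf_eq, mem_compl_iff, Metric.mem_closedBall, not_le]
        constructor
        · intro h i; rw [dist_comm]; exact h i
        · intro h i; rw [dist_comm]; exact h i
      by_cases h : (S, x) ∈ W
      · rw [Set.indicator_of_mem h, Set.indicator_of_mem (hiff.mp h)]
        rfl
      · rw [Set.indicator_of_notMem h, Set.indicator_of_notMem (fun hc => h (hiff.mpr hc))]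
    have h2 : MeasurableSet {S : Fin N → Euc n | ∀ i, S i ∈ (Metric.closedBall x r)ᶜ} := by
      have : {S : Fin N → Euc n | ∀ i, S i ∈ (Metric.closedBall x r)ᶜ} =
          ⋂ i, (fun S : Fin N → Euc n => S i) ⁻¹' (Metric.closedBall x r)ᶜ := by
        ext S; simp
      rw [this]
      exact MeasurableSet.iInter fun i =>
        (measurableSet_closedBall.compl).preimage (measurable_pi_apply i)
    rw [h1, lintegral_indicator h2]
    simp only [Pi.one_apply]
    rw [setLIntegral_one, iid_cylinder μ N measurableSet_closedBall.compl,
      prob_compl_eq_one_sub measurableSet_closedBall]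
  rw [hswap]
  simp_rw [hinner]
  -- split the integral over the support
  have hKm : MeasurableSet (msupport μ) := (isClosed_msupport μ).measurableSet
  rw [← lintegral_add_compl _ hKm]
  have hout : ∫⁻ x in (msupport μ)ᶜ, (1 - μ (Metric.closedBall x r)) ^ N ∂μ = 0 := by
    refine le_antisymm ?_ zero_le
    calc ∫⁻ x in (msupport μ)ᶜ, (1 - μ (Metric.closedBall x r)) ^ N ∂μ
        ≤ ∫⁻ _ in (msupport μ)ᶜ, 1 ∂μ :=
          lintegral_mono fun x => pow_le_one' tsub_le_self N
      _ = μ (msupport μ)ᶜ := setLIntegral_one _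
      _ = 0 := measure_compl_msupport μ
  have hin : ∫⁻ x in msupport μ, (1 - μ (Metric.closedBall x r)) ^ N ∂μ ≤
      ENNReal.ofReal (T.card * (1 / N)) := by
    calc ∫⁻ x in msupport μ, (1 - μ (Metric.closedBall x r)) ^ N ∂μ
        ≤ ∫⁻ x in (⋃ t ∈ T, Metric.ball t (r / 2)), (1 - μ (Metric.closedBall x r)) ^ N ∂μ :=
          lintegral_mono_set hcov
      _ ≤ ∑ t ∈ T, ∫⁻ x in Metric.ball t (r / 2), (1 - μ (Metric.closedBall x r)) ^ N ∂μ :=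
          lintegral_biUnion_finset_le μ _ T _
      _ ≤ ∑ t ∈ T, ENNReal.ofReal (1 / N) := by
          refine Finset.sum_le_sum fun t _ => ?_
          have hcell : ∀ x ∈ Metric.ball t (r / 2),
              (1 - μ (Metric.closedBall x r)) ^ N ≤ (1 - μ (Metric.ball t (r / 2))) ^ N := by
            intro x hx
            refine pow_le_pow_left' (tsub_le_tsub_left (measure_mono ?_) 1) N
            intro y hy
            simp only [Metric.mem_ball] at hy hx
            simp only [Metric.mem_closedBall]
            calc dist y x ≤ dist y t + dist t x := dist_triangle _ _ _
              _ ≤ r / 2 + r / 2 := by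
                  rw [dist_comm t x]; exact add_le_add hy.le hx.le
              _ = r := by ring
          calc ∫⁻ x in Metric.ball t (r / 2), (1 - μ (Metric.closedBall x r)) ^ N ∂μ
              ≤ ∫⁻ _ in Metric.ball t (r / 2), (1 - μ (Metric.ball t (r / 2))) ^ N ∂μ :=
                setLIntegral_mono (measurable_const) hcell
            _ = (1 - μ (Metric.ball t (r / 2))) ^ N * μ (Metric.ball t (r / 2)) :=
                setLIntegral_const _ _
            _ ≤ ENNReal.ofReal (1 / N) := by
                have hq1 : μ (Metric.ball t (r / 2)) ≤ 1 := prob_le_one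
                have hqt : μ (Metric.ball t (r / 2)) ≠ ⊤ := (lt_of_le_of_lt hq1 one_lt_top).ne
                have h0r : 0 ≤ (μ (Metric.ball t (r / 2))).toReal := ENNReal.toReal_nonneg
                have h1r : (μ (Metric.ball t (r / 2))).toReal ≤ 1 := by
                  rw [← ENNReal.toReal_one]
                  exact ENNReal.toReal_mono one_ne_top hq1
                have e1 : (1 : ℝ≥0∞) - μ (Metric.ball t (r / 2)) =
                    ENNReal.ofReal (1 - (μ (Metric.ball t (r / 2))).toReal) := by
                  rw [ENNReal.ofReal_sub _ h0r, ENNReal.ofReal_one,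
                    ENNReal.ofReal_toReal hqt]
                calc (1 - μ (Metric.ball t (r / 2))) ^ N * μ (Metric.ball t (r / 2))
                    = ENNReal.ofReal (1 - (μ (Metric.ball t (r / 2))).toReal) ^ N *
                      ENNReal.ofReal ((μ (Metric.ball t (r / 2))).toReal) := by
                      rw [e1]
                      congr 1
                      exact (ENNReal.ofReal_toReal hqt).symm
                  _ = ENNReal.ofReal ((1 - (μ (Metric.ball t (r / 2))).toReal) ^ N *
                      (μ (Metric.ball t (r / 2))).toReal) := by
                      rw [← ENNReal.ofReal_pow (by linarith),
                        ← ENNReal.ofReal_mul (pow_nonneg (by linarith) N)]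
                  _ ≤ ENNReal.ofReal (1 / N) := by
                      refine ENNReal.ofReal_le_ofReal ?_
                      have := aux_q_bound h0r h1r hN
                      linarith [this, mul_comm ((1 - (μ (Metric.ball t (r / 2))).toReal) ^ N)
                        ((μ (Metric.ball t (r / 2))).toReal)]
      _ = ENNReal.ofReal (T.card * (1 / N)) := by
          rw [Finset.sum_const, nsmul_eq_mul, ← ENNReal.ofReal_natCast T.card,
            ← ENNReal.ofReal_mul (by positivity)]
  calc ∫⁻ x in msupport μ, _ ∂μ + ∫⁻ x in (msupport μ)ᶜ, _ ∂μ
      ≤ ENNReal.ofReal (T.card * (1 / N)) + 0 := add_le_add hin (le_of_eq hout)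
    _ = ENNReal.ofReal (T.card * (1 / N)) := by rw [add_zero]

lemma measurable_ballmass (ν : Measure (Euc n)) [SFinite ν] (r : ℝ) :
    Measurable fun s : Euc n => ν (Metric.closedBall s r) := by
  have hWm : MeasurableSet {p : Euc n × Euc n | dist p.2 p.1 ≤ r} :=
    measurableSet_le (Measurable.dist measurable_snd measurable_fst) measurable_const
  have h : (fun s : Euc n => ν (Metric.closedBall s r)) = fun s =>
      ∫⁻ y, ({p : Euc n × Euc n | dist p.2 p.1 ≤ r}).indicator
        (1 : Euc n × Euc n → ℝ≥0∞) (s, y) ∂ν := by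
    funext s
    have h1 : (fun y : Euc n => ({p : Euc n × Euc n | dist p.2 p.1 ≤ r}).indicator
        (1 : Euc n × Euc n → ℝ≥0∞) (s, y)) =
        fun y => (Metric.closedBall s r).indicator (1 : Euc n → ℝ≥0∞) y := by
      funext y
      by_cases h : dist y s ≤ r
      · rw [Set.indicator_of_mem (by exact h),
          Set.indicator_of_mem (Metric.mem_closedBall.mpr h)]
        rfl
      · rw [Set.indicator_of_notMem (by exact h),
          Set.indicator_of_notMem (fun hc => h (Metric.mem_closedBall.mp hc))]
    rw [h1, lintegral_indicator measurableSet_closedBall]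
    simp
  rw [h]
  exact Measurable.lintegral_prod_right' (measurable_one.indicator hWm)

lemma lintegral_out_sum (μ ν : Measure (Euc n)) [IsProbabilityMeasure μ] [SFinite ν] (r : ℝ) :
    ∫⁻ S, (∑ i, ν (Metric.closedBall (S i) r)) ∂(iidSamples μ N) =
      N * ∫⁻ s, ν (Metric.closedBall s r) ∂μ := by
  rw [lintegral_finset_sum (μ := iidSamples μ N)
    (f := fun (i : Fin N) (S : Fin N → Euc n) => ν (Metric.closedBall (S i) r))
    Finset.univ
    (fun i _ => (measurable_ballmass ν r).comp (measurable_pi_apply i))]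
  have h : ∀ i : Fin N, ∫⁻ S, ν (Metric.closedBall (S i) r) ∂(iidSamples μ N) =
      ∫⁻ s, ν (Metric.closedBall s r) ∂μ := fun i =>
    iid_lintegral_eval μ N i (measurable_ballmass ν r)
  rw [Finset.sum_congr rfl (fun i _ => h i), Finset.sum_const]
  simp [nsmul_eq_mul, mul_comm]

lemma density_zero_compl_msupport {f : Euc n → ℝ} (hf0 : ∀ x, 0 ≤ f x) (hcont : Continuous f)
    {x : Euc n} (hx : x ∉ msupport (volume.withDensity fun x => ENNReal.ofReal (f x))) :
    f x = 0 :=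
  density_zero_on_open hf0 hcont (isClosed_msupport _).isOpen_compl
    (measure_compl_msupport _) x hx

lemma volume_closedBall_eq (s : Euc n) {r : ℝ} (hr : 0 ≤ r) :
    volume (Metric.closedBall s r) =
      ENNReal.ofReal (r ^ n) * volume (Metric.ball (0 : Euc n) 1) := by
  rw [MeasureTheory.Measure.addHaar_closedBall volume s hr]
  congr 2
  simp [finrank_euclideanSpace]

lemma ballmass_eq (ν : Measure (Euc n)) (r : ℝ) (s : Euc n) :
    ν (Metric.closedBall s r) =
      ∫⁻ y, ({p : Euc n × Euc n | dist p.2 p.1 ≤ r}).indicator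
        (1 : Euc n × Euc n → ℝ≥0∞) (s, y) ∂ν := by
  have h1 : (fun y : Euc n => ({p : Euc n × Euc n | dist p.2 p.1 ≤ r}).indicator
      (1 : Euc n × Euc n → ℝ≥0∞) (s, y)) =
      fun y => (Metric.closedBall s r).indicator (1 : Euc n → ℝ≥0∞) y := by
    funext y
    by_cases h : dist y s ≤ r
    · rw [Set.indicator_of_mem (by exact h),
        Set.indicator_of_mem (Metric.mem_closedBall.mpr h)]
      rfl
    · rw [Set.indicator_of_notMem (by exact h),
        Set.indicator_of_notMem (fun hc => h (Metric.mem_closedBall.mp hc))]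
  rw [h1, lintegral_indicator measurableSet_closedBall]
  simp

lemma lintegral_ballmass_volume (ν : Measure (Euc n)) [IsProbabilityMeasure ν] {r : ℝ}
    (hr : 0 ≤ r) :
    ∫⁻ s, ν (Metric.closedBall s r) ∂volume =
      ENNReal.ofReal (r ^ n) * volume (Metric.ball (0 : Euc n) 1) := by
  have hWm : MeasurableSet {p : Euc n × Euc n | dist p.2 p.1 ≤ r} :=
    measurableSet_le (Measurable.dist measurable_snd measurable_fst) measurable_const
  rw [show (fun s : Euc n => ν (Metric.closedBall s r)) = fun s =>
      ∫⁻ y, ({p : Euc n × Euc n | dist p.2 p.1 ≤ r}).indicator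
        (1 : Euc n × Euc n → ℝ≥0∞) (s, y) ∂ν from funext fun s => ballmass_eq ν r s]
  rw [lintegral_lintegral_swap (f := fun (s y : Euc n) =>
    ({p : Euc n × Euc n | dist p.2 p.1 ≤ r}).indicator
      (1 : Euc n × Euc n → ℝ≥0∞) (s, y)) (measurable_one.indicator hWm).aemeasurable]
  have hinner : ∀ y : Euc n, ∫⁻ s, ({p : Euc n × Euc n | dist p.2 p.1 ≤ r}).indicator
      (1 : Euc n × Euc n → ℝ≥0∞) (s, y) ∂volume =
      ENNReal.ofReal (r ^ n) * volume (Metric.ball (0 : Euc n) 1) := by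
    intro y
    have h1 : (fun s : Euc n => ({p : Euc n × Euc n | dist p.2 p.1 ≤ r}).indicator
        (1 : Euc n × Euc n → ℝ≥0∞) (s, y)) =
        fun s => (Metric.closedBall y r).indicator (1 : Euc n → ℝ≥0∞) s := by
      funext s
      by_cases h : dist y s ≤ r
      · rw [Set.indicator_of_mem (by exact h),
          Set.indicator_of_mem (Metric.mem_closedBall.mpr (by rw [dist_comm]; exact h))]
        rfl
      · rw [Set.indicator_of_notMem (by exact h),
          Set.indicator_of_notMem
            (fun hc => h (by rw [dist_comm]; exact Metric.mem_closedBall.mp hc))]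
    rw [h1, lintegral_indicator measurableSet_closedBall]
    simp only [Pi.one_apply]
    rw [setLIntegral_one, volume_closedBall_eq y hr]
  rw [lintegral_congr hinner, lintegral_const, measure_univ, mul_one]

lemma key_bound_out (μ ν : Measure (Euc n)) [IsProbabilityMeasure μ] [IsProbabilityMeasure ν]
    {γ C r : ℝ} (hγ : 0 < γ) (hC : 0 ≤ C) (hr : 0 < r)
    {g : Euc n → ℝ} (hg0 : ∀ x, 0 ≤ g x) (hgH : ∀ x y, |g x - g y| ≤ C * ‖x - y‖ ^ γ)
    (hgd : ν = volume.withDensity fun x => ENNReal.ofReal (g x))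
    (hdisj : msupport μ ∩ msupport ν = ∅) :
    ∫⁻ s, ν (Metric.closedBall s r) ∂μ ≤
      ENNReal.ofReal (C * r ^ γ * r ^ n) * volume (Metric.ball (0 : Euc n) 1) := by
  have hgc : Continuous g := holder_continuous hγ hC hgH
  have hpt : ∀ s ∈ msupport μ, ν (Metric.closedBall s r) ≤
      ENNReal.ofReal (C * r ^ γ * r ^ n) * volume (Metric.ball (0 : Euc n) 1) := by
    intro s hs
    have hgs : g s = 0 := by
      refine density_zero_compl_msupport hg0 hgc (x := s) ?_
      rw [← hgd]
      exact fun hsν => (eq_empty_iff_forall_notMem.mp hdisj s) ⟨hs, hsν⟩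
    have hb : ∀ y ∈ Metric.closedBall s r, g y ≤ C * r ^ γ := by
      intro y hy
      have h1 := abs_le.mp (hgH y s)
      have h2 : ‖y - s‖ ^ γ ≤ r ^ γ := by
        refine Real.rpow_le_rpow (norm_nonneg _) ?_ hγ.le
        rw [← dist_eq_norm]; exact Metric.mem_closedBall.mp hy
      have h3 : C * ‖y - s‖ ^ γ ≤ C * r ^ γ := mul_le_mul_of_nonneg_left h2 hC
      linarith [h1.2]
    calc ν (Metric.closedBall s r)
        = ∫⁻ y in Metric.closedBall s r, ENNReal.ofReal (g y) ∂volume := by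
          rw [hgd, withDensity_apply _ measurableSet_closedBall]
      _ ≤ ∫⁻ _ in Metric.closedBall s r, ENNReal.ofReal (C * r ^ γ) ∂volume :=
          setLIntegral_mono measurable_const (fun y hy => ENNReal.ofReal_le_ofReal (hb y hy))
      _ = ENNReal.ofReal (C * r ^ γ) * volume (Metric.closedBall s r) :=
          setLIntegral_const _ _
      _ = ENNReal.ofReal (C * r ^ γ * r ^ n) * volume (Metric.ball (0 : Euc n) 1) := by
          rw [volume_closedBall_eq s hr.le, ← mul_assoc,
            ← ENNReal.ofReal_mul (by positivity)]
  have hae : ∀ᵐ s ∂μ, ν (Metric.closedBall s r) ≤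
      ENNReal.ofReal (C * r ^ γ * r ^ n) * volume (Metric.ball (0 : Euc n) 1) := by
    have h0 : ∀ᵐ s ∂μ, s ∈ msupport μ := by
      rw [ae_iff]
      exact measure_compl_msupport μ
    exact h0.mono fun s hs => hpt s hs
  calc ∫⁻ s, ν (Metric.closedBall s r) ∂μ
      ≤ ∫⁻ _, ENNReal.ofReal (C * r ^ γ * r ^ n) *
          volume (Metric.ball (0 : Euc n) 1) ∂μ := lintegral_mono_ae hae
    _ = _ := by rw [lintegral_const, measure_univ, mul_one]

lemma key_bound_in (μ ν : Measure (Euc n)) [IsProbabilityMeasure μ] [IsProbabilityMeasure ν]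
    {γ C r : ℝ} (hγ : 0 < γ) (hC : 0 ≤ C) (hr : 0 < r)
    {f : Euc n → ℝ} (hf0 : ∀ x, 0 ≤ f x) (hfH : ∀ x y, |f x - f y| ≤ C * ‖x - y‖ ^ γ)
    (hfd : μ = volume.withDensity fun x => ENNReal.ofReal (f x))
    (hdisj : msupport μ ∩ msupport ν = ∅) :
    ∫⁻ s, ν (Metric.closedBall s r) ∂μ ≤
      ENNReal.ofReal (C * r ^ γ * r ^ n) * volume (Metric.ball (0 : Euc n) 1) := by
  have hfc : Continuous f := holder_continuous hγ hC hfH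
  have hν0 : ∀ s : Euc n, ν (Metric.closedBall s r) ≠ 0 → f s ≤ C * r ^ γ := by
    intro s hν
    have hmeet : (Metric.closedBall s r ∩ msupport ν).Nonempty := by
      rw [Set.nonempty_iff_ne_empty]
      intro hdis
      have hsubs : Metric.closedBall s r ⊆ (msupport ν)ᶜ := by
        intro z hz hzν
        exact (eq_empty_iff_forall_notMem.mp hdis z) ⟨hz, hzν⟩
      exact hν (measure_mono_null hsubs (measure_compl_msupport ν))
    obtain ⟨y, hyB, hyν⟩ := hmeet
    have hfy : f y = 0 := by
      refine density_zero_compl_msupport hf0 hfc (x := y) ?_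
      rw [← hfd]
      exact fun hyμ => (eq_empty_iff_forall_notMem.mp hdisj y) ⟨hyμ, hyν⟩
    have h1 := abs_le.mp (hfH s y)
    have h2 : ‖s - y‖ ^ γ ≤ r ^ γ := by
      refine Real.rpow_le_rpow (norm_nonneg _) ?_ hγ.le
      rw [← dist_eq_norm, dist_comm]
      exact Metric.mem_closedBall.mp hyB
    have h3 : C * ‖s - y‖ ^ γ ≤ C * r ^ γ := mul_le_mul_of_nonneg_left h2 hC
    linarith [h1.2]
  have hmeasf : Measurable fun x : Euc n => ENNReal.ofReal (f x) :=
    ENNReal.measurable_ofReal.comp hfc.measurable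
  calc ∫⁻ s, ν (Metric.closedBall s r) ∂μ
      = ∫⁻ s, ((fun x => ENNReal.ofReal (f x)) *
          fun s => ν (Metric.closedBall s r)) s ∂volume := by
        rw [hfd, lintegral_withDensity_eq_lintegral_mul volume hmeasf (measurable_ballmass ν r)]
    _ ≤ ∫⁻ s, ENNReal.ofReal (C * r ^ γ) * ν (Metric.closedBall s r) ∂volume := by
        refine lintegral_mono fun s => ?_
        simp only [Pi.mul_apply]
        by_cases h : ν (Metric.closedBall s r) = 0
        · rw [h, mul_zero, mul_zero]
        · exact mul_le_mul_left (ENNReal.ofReal_le_ofReal (hν0 s h)) _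
    _ = ENNReal.ofReal (C * r ^ γ) * ∫⁻ s, ν (Metric.closedBall s r) ∂volume :=
        lintegral_const_mul _ (measurable_ballmass ν r)
    _ = ENNReal.ofReal (C * r ^ γ) * (ENNReal.ofReal (r ^ n) *
        volume (Metric.ball (0 : Euc n) 1)) := by
        rw [lintegral_ballmass_volume ν hr.le]
    _ = ENNReal.ofReal (C * r ^ γ * r ^ n) * volume (Metric.ball (0 : Euc n) 1) := by
        rw [← mul_assoc, ← ENNReal.ofReal_mul (by positivity)]

lemma numeric_main {n : ℕ} {γ C R vc ε δ : ℝ} (hγ : 0 < γ) (hC : 0 ≤ C) (hR : 0 < R)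
    (hvc : 0 < vc) (hε : 0 < ε) (hε2 : ε < 1/2) (hδ : 0 < δ) (hδ2 : δ < 1/2)
    {N : ℕ}
    (hNR : 2 * 9 ^ n / (ε * δ) ≤ (N : ℝ))
    (hNW : (2 * (9 * R) ^ n * (2 * (C + 1) * (vc + 1)) / (ε * δ) ^ 2 + 1) ^
      (((n : ℝ) + γ) / γ) ≤ (N : ℝ)) :
    (0 < min R ((ε * δ / (2 * (C + 1) * (vc + 1) * N)) ^ (1 / ((n : ℝ) + γ))) ∧
      min R ((ε * δ / (2 * (C + 1) * (vc + 1) * N)) ^ (1 / ((n : ℝ) + γ))) ≤ R) ∧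
    ((N : ℝ) * (C * (min R ((ε * δ / (2 * (C + 1) * (vc + 1) * N)) ^ (1 / ((n : ℝ) + γ)))) ^ γ *
        (min R ((ε * δ / (2 * (C + 1) * (vc + 1) * N)) ^ (1 / ((n : ℝ) + γ)))) ^ n * vc)
        ≤ ε * δ / 2 ∧
      2 * (9 * R) ^ n / (ε * δ * N) ≤
        (min R ((ε * δ / (2 * (C + 1) * (vc + 1) * N)) ^ (1 / ((n : ℝ) + γ)))) ^ n) := by
  have hεδ : 0 < ε * δ := mul_pos hε hδ
  have hεδ1 : ε * δ ≤ 1 := by nlinarith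
  set D₀ : ℝ := 2 * (C + 1) * (vc + 1) with hD₀def
  have hD₀2 : (2 : ℝ) ≤ D₀ := by nlinarith
  have hD₀0 : (0 : ℝ) < D₀ := by linarith
  have h9 : (1 : ℝ) ≤ 9 ^ n := one_le_pow₀ (by norm_num)
  have hN2 : (2 : ℝ) ≤ N := by
    refine le_trans ?_ hNR
    rw [le_div_iff₀ hεδ]
    nlinarith
  have hN0 : (0 : ℝ) < N := by linarith
  have hnγ : (0 : ℝ) < (n : ℝ) + γ := by positivity
  set y : ℝ := ε * δ / (D₀ * N) with hydef
  have hy0 : 0 < y := by positivity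
  have hy1 : y ≤ 1 := by
    rw [div_le_one (by positivity)]
    nlinarith
  set x : ℝ := y ^ (1 / ((n : ℝ) + γ)) with hxdef
  have hx0 : 0 < x := Real.rpow_pos_of_pos hy0 _
  set r : ℝ := min R x with hrdef
  have hr0 : 0 < r := lt_min hR hx0
  have hrR : r ≤ R := min_le_left _ _
  have hrx : r ≤ x := min_le_right _ _
  refine ⟨⟨hr0, hrR⟩, ?_, ?_⟩
  · -- KB1
    have hxγn : x ^ γ * x ^ n = y := by
      rw [hxdef, ← Real.rpow_natCast (y ^ (1 / ((n : ℝ) + γ))) n,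
        ← Real.rpow_mul hy0.le, ← Real.rpow_mul hy0.le, ← Real.rpow_add hy0]
      rw [show 1 / ((n : ℝ) + γ) * γ + 1 / ((n : ℝ) + γ) * (n : ℝ) = 1 by
        field_simp; ring]
      exact Real.rpow_one y
    have hrles : r ^ γ * r ^ n ≤ y := by
      calc r ^ γ * r ^ n ≤ x ^ γ * x ^ n := by
            refine mul_le_mul (Real.rpow_le_rpow hr0.le hrx hγ.le)
              (pow_le_pow_left₀ hr0.le hrx n) (by positivity) (by positivity)
        _ = y := hxγn
    calc (N : ℝ) * (C * r ^ γ * r ^ n * vc)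
        ≤ (N : ℝ) * (C * y * vc) := by
          have : C * r ^ γ * r ^ n ≤ C * y := by
            calc C * r ^ γ * r ^ n = C * (r ^ γ * r ^ n) := by ring
              _ ≤ C * y := mul_le_mul_of_nonneg_left hrles hC
          nlinarith [hvc.le, hN0.le, mul_le_mul_of_nonneg_right this hvc.le]
      _ = C * vc * (ε * δ) / D₀ := by
          rw [hydef]; field_simp
      _ ≤ ε * δ / 2 := by
          rw [div_le_div_iff₀ hD₀0 (by norm_num)]
          have h1 : 2 * (C * vc) ≤ D₀ := by nlinarith
          nlinarith
  · -- KB2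
    rcases min_cases R x with ⟨hmin, hle⟩ | ⟨hmin, hlt⟩
    · -- r = R
      rw [hrdef, hmin]
      rw [div_le_iff₀ (by positivity)]
      have : 2 * 9 ^ n ≤ ε * δ * N := by
        have := (div_le_iff₀ hεδ).mp hNR
        nlinarith
      calc 2 * (9 * R) ^ n = 2 * 9 ^ n * R ^ n := by rw [mul_pow]; ring
        _ ≤ ε * δ * N * R ^ n := by nlinarith [pow_pos hR n]
        _ = R ^ n * (ε * δ * N) := by ring
    · -- r = x
      rw [hrdef, hmin]
      set θ : ℝ := (n : ℝ) / ((n : ℝ) + γ) with hθdef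
      have hθ0 : 0 ≤ θ := by positivity
      have hθ1 : θ ≤ 1 := by
        rw [div_le_one hnγ]; linarith
      have hxn : x ^ n = y ^ θ := by
        rw [hxdef, ← Real.rpow_natCast (y ^ (1 / ((n : ℝ) + γ))) n, ← Real.rpow_mul hy0.le]
        congr 1
        rw [hθdef]
        field_simp
      rw [hxn]
      have hstep1 : ε * δ / (D₀ * (N : ℝ) ^ θ) ≤ y ^ θ := by
        have h1 : y ^ θ = (ε * δ) ^ θ / (D₀ * N) ^ θ := by
          rw [hydef, Real.div_rpow hεδ.le (by positivity)]
        have h2 : ε * δ ≤ (ε * δ) ^ θ := by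
          have := Real.rpow_le_rpow_of_exponent_ge hεδ hεδ1 hθ1
          rwa [Real.rpow_one] at this
        have h3 : (D₀ * N) ^ θ ≤ D₀ * (N : ℝ) ^ θ := by
          rw [Real.mul_rpow hD₀0.le hN0.le]
          refine mul_le_mul_of_nonneg_right ?_ (by positivity)
          have := Real.rpow_le_rpow_of_exponent_le (by linarith : (1:ℝ) ≤ D₀) hθ1
          rwa [Real.rpow_one] at this
        rw [h1]
        have hb0 : (0:ℝ) < (D₀ * N) ^ θ := Real.rpow_pos_of_pos (by positivity) _
        calc ε * δ / (D₀ * (N : ℝ) ^ θ) ≤ ε * δ / ((D₀ * N) ^ θ) := by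
              gcongr
          _ ≤ (ε * δ) ^ θ / ((D₀ * N) ^ θ) := by gcongr
      have hstep2 : 2 * (9 * R) ^ n / (ε * δ * N) ≤ ε * δ / (D₀ * (N : ℝ) ^ θ) := by
        set W : ℝ := 2 * (9 * R) ^ n * D₀ / (ε * δ) ^ 2 with hWdef
        have hW0 : 0 ≤ W := by positivity
        have hBge : W + 1 ≤ (N : ℝ) ^ (γ / ((n : ℝ) + γ)) := by
          have h1 : ((W + 1) ^ (((n : ℝ) + γ) / γ)) ^ (γ / ((n : ℝ) + γ)) ≤
              (N : ℝ) ^ (γ / ((n : ℝ) + γ)) :=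
            Real.rpow_le_rpow (by positivity) hNW (by positivity)
          rwa [← Real.rpow_mul (by positivity),
            show ((n : ℝ) + γ) / γ * (γ / ((n : ℝ) + γ)) = 1 by
              field_simp, Real.rpow_one] at h1
        have hsplit : (N : ℝ) = (N : ℝ) ^ θ * (N : ℝ) ^ (γ / ((n : ℝ) + γ)) := by
          rw [← Real.rpow_add hN0, hθdef,
            show (n : ℝ) / ((n : ℝ) + γ) + γ / ((n : ℝ) + γ) = 1 by field_simp,
            Real.rpow_one]
        have hA0 : (0:ℝ) < (N : ℝ) ^ θ := Real.rpow_pos_of_pos hN0 _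
        have hWeq : (ε * δ) ^ 2 * W = 2 * (9 * R) ^ n * D₀ := by
          rw [hWdef]; field_simp
        have hB' : 2 * (9 * R) ^ n * D₀ ≤ (ε * δ) ^ 2 * (N : ℝ) ^ (γ / ((n : ℝ) + γ)) := by
          calc 2 * (9 * R) ^ n * D₀ = (ε * δ) ^ 2 * W := hWeq.symm
            _ ≤ (ε * δ) ^ 2 * (W + 1) :=
                mul_le_mul_of_nonneg_left (by linarith) (by positivity)
            _ ≤ (ε * δ) ^ 2 * (N : ℝ) ^ (γ / ((n : ℝ) + γ)) :=
                mul_le_mul_of_nonneg_left hBge (by positivity)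
        rw [div_le_div_iff₀ (by positivity) (by positivity)]
        calc 2 * (9 * R) ^ n * (D₀ * (N : ℝ) ^ θ) = (2 * (9 * R) ^ n * D₀) * (N : ℝ) ^ θ := by
              ring
          _ ≤ ((ε * δ) ^ 2 * (N : ℝ) ^ (γ / ((n : ℝ) + γ))) * (N : ℝ) ^ θ := by
              exact mul_le_mul_of_nonneg_right hB' hA0.le
          _ = ε * δ * (ε * δ * ((N : ℝ) ^ θ * (N : ℝ) ^ (γ / ((n : ℝ) + γ)))) := by ring
          _ = ε * δ * (ε * δ * N) := by rw [← hsplit]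
      exact hstep2.trans hstep1

end AuxOOD

/-- **Uniform OOD detection under Hölder continuity and bounded ID supports.** -/
theorem uniform_OOD_detection_holder
    (n : ℕ) (γ C R : ℝ) (hγ : 0 < γ) (hC : 0 ≤ C) (hR : 0 < R)
    (𝒟 : Set (Domain (Euc n))) (hprob : ∀ D ∈ 𝒟, D.IsProb)
    (hdsa : ∀ D ∈ 𝒟, D.DSA) (hbdd : ∀ D ∈ 𝒟, D.BoundedID R)
    (hholder : (∀ D ∈ 𝒟, HolderDensity γ C D.inD) ∨ (∀ D ∈ 𝒟, HolderDensity γ C D.outD))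
    (α : ℝ) (hα : α ∈ Set.Ioo (0 : ℝ) 1) :
    UniformlyLearnable 𝒟 Set.univ α := by
  classical
  set vb : ℝ≥0∞ := volume (Metric.ball (0 : Euc n) 1) with hvbdef
  have hvb0 : vb ≠ 0 := (Metric.measure_ball_pos volume _ one_pos).ne'
  have hvbt : vb ≠ ⊤ := measure_ball_lt_top.ne
  set vc : ℝ := vb.toReal with hvcdef
  have hvc0 : 0 < vc := ENNReal.toReal_pos hvb0 hvbt
  refine ⟨fun ε δ => max ⌈2 * 9 ^ n / (ε * δ)⌉₊
      (⌈(2 * (9 * R) ^ n * (2 * (C + 1) * (vc + 1)) / (ε * δ) ^ 2 + 1) ^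
        (((n : ℝ) + γ) / γ)⌉₊ + 1),
    fun ε δ m S => ⋃ i, Metric.closedBall (S i)
      (min R ((ε * δ / (2 * (C + 1) * (vc + 1) * m)) ^ (1 / ((n : ℝ) + γ)))),
    fun _ _ _ _ => Set.mem_univ _, ?_⟩
  intro ε δ hε hε2 hδ hδ2 D hD
  dsimp only
  obtain ⟨hpin, hpout⟩ := hprob D hD
  haveI := hpin
  haveI := hpout
  set N : ℕ := max ⌈2 * 9 ^ n / (ε * δ)⌉₊
      (⌈(2 * (9 * R) ^ n * (2 * (C + 1) * (vc + 1)) / (ε * δ) ^ 2 + 1) ^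
        (((n : ℝ) + γ) / γ)⌉₊ + 1) with hNdef
  have hεδ : 0 < ε * δ := mul_pos hε hδ
  have hNR : 2 * 9 ^ n / (ε * δ) ≤ (N : ℝ) := by
    refine (Nat.le_ceil _).trans ?_
    exact Nat.cast_le.mpr (le_max_left _ _)
  have hNW : (2 * (9 * R) ^ n * (2 * (C + 1) * (vc + 1)) / (ε * δ) ^ 2 + 1) ^
      (((n : ℝ) + γ) / γ) ≤ (N : ℝ) := by
    refine (Nat.le_ceil _).trans ?_
    have h1 : (⌈(2 * (9 * R) ^ n * (2 * (C + 1) * (vc + 1)) / (ε * δ) ^ 2 + 1) ^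
        (((n : ℝ) + γ) / γ)⌉₊ : ℝ) ≤
        ((⌈(2 * (9 * R) ^ n * (2 * (C + 1) * (vc + 1)) / (ε * δ) ^ 2 + 1) ^
        (((n : ℝ) + γ) / γ)⌉₊ + 1 : ℕ) : ℝ) := by
      push_cast; linarith
    refine h1.trans ?_
    exact Nat.cast_le.mpr (le_max_right _ _)
  have hN1 : 1 ≤ N := by
    refine le_trans ?_ (le_max_left _ _)
    refine Nat.one_le_ceil_iff.mpr ?_
    positivity
  obtain ⟨⟨hr0, hrR⟩, KB1, KB2⟩ := numeric_main hγ hC hR hvc0 hε hε2 hδ hδ2 hNR hNW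
  set r : ℝ := min R ((ε * δ / (2 * (C + 1) * (vc + 1) * N)) ^ (1 / ((n : ℝ) + γ))) with hrdef
  haveI : IsProbabilityMeasure (iidSamples D.inD N) := by
    unfold iidSamples; infer_instance
  -- diameter of the support
  have hdiam : ∀ x ∈ msupport D.inD, ∀ y ∈ msupport D.inD, dist x y < R := by
    intro x hx y hy
    have h2 := hbdd D hD
    unfold Domain.BoundedID at h2
    exact edist_lt_ofReal.mp (lt_of_le_of_lt (EMetric.edist_le_diam_of_mem hx hy) h2)
  obtain ⟨T, hTK, hTcov, hTcard⟩ := exists_net hR hr0 hrR hdiam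
  -- the two expectation bounds
  have hmiss : ∫⁻ S, D.inD ((⋃ i, Metric.closedBall (S i) r)ᶜ) ∂(iidSamples D.inD N) ≤
      ENNReal.ofReal (T.card * (1 / N)) := lintegral_miss_le D.inD hr0 hN1 T hTcov
  have hkey : ∫⁻ s, D.outD (Metric.closedBall s r) ∂D.inD ≤
      ENNReal.ofReal (C * r ^ γ * r ^ n) * vb := by
    have hdsa' := hdsa D hD
    unfold Domain.DSA at hdsa'
    rcases hholder with hin | hout
    · obtain ⟨f, hf0, hfH, hfd⟩ := hin D hD
      exact key_bound_in D.inD D.outD hγ hC hr0 hf0 hfH hfd hdsa'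
    · obtain ⟨g, hg0, hgH, hgd⟩ := hout D hD
      exact key_bound_out D.inD D.outD hγ hC hr0 hg0 hgH hgd hdsa'
  have hGint : ∫⁻ S, (∑ i, D.outD (Metric.closedBall (S i) r)) ∂(iidSamples D.inD N) ≤
      ENNReal.ofReal ((N : ℝ) * (C * r ^ γ * r ^ n * vc)) := by
    rw [lintegral_out_sum D.inD D.outD r]
    calc (N : ℝ≥0∞) * ∫⁻ s, D.outD (Metric.closedBall s r) ∂D.inD
        ≤ (N : ℝ≥0∞) * (ENNReal.ofReal (C * r ^ γ * r ^ n) * vb) := mul_le_mul_right hkey _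
      _ = ENNReal.ofReal ((N : ℝ) * (C * r ^ γ * r ^ n * vc)) := by
          rw [← ENNReal.ofReal_toReal hvbt, ← hvcdef, ← ENNReal.ofReal_natCast N,
            ← ENNReal.ofReal_mul (by positivity), ← ENNReal.ofReal_mul (by positivity)]
  -- the two measurable error functionals
  have hf1m : Measurable fun S : Fin N → Euc n =>
      D.inD ((⋃ i, Metric.closedBall (S i) r)ᶜ) := measurable_miss D.inD r
  have hGm : Measurable fun S : Fin N → Euc n =>
      ∑ i, D.outD (Metric.closedBall (S i) r) :=
    Finset.measurable_sum Finset.univ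
      (fun i _ => (measurable_ballmass D.outD r).comp (measurable_pi_apply i))
  have KB2' : (T.card : ℝ) * (1 / N) ≤ ε * δ / 2 := by
    have hN0' : (0 : ℝ) < N := by
      have : (1 : ℝ) ≤ N := by exact_mod_cast hN1
      linarith
    have hrn0 : (0 : ℝ) < r ^ n := pow_pos hr0 n
    have h5 : (T.card : ℝ) ≤ ε * δ * N / 2 := by
      calc (T.card : ℝ) ≤ (9 * R / r) ^ n := hTcard
        _ = (9 * R) ^ n / r ^ n := div_pow _ _ _
        _ ≤ ε * δ * N / 2 := by
            rw [div_le_div_iff₀ hrn0 (by norm_num)]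
            have h6 := (div_le_iff₀ (by positivity : (0:ℝ) < ε * δ * N)).mp KB2
            nlinarith
    calc (T.card : ℝ) * (1 / N) ≤ (ε * δ * N / 2) * (1 / N) :=
          mul_le_mul_of_nonneg_right h5 (by positivity)
      _ = ε * δ / 2 := by
          field_simp
  have htotal : ∫⁻ S, (D.inD ((⋃ i, Metric.closedBall (S i) r)ᶜ) +
      ∑ i, D.outD (Metric.closedBall (S i) r)) ∂(iidSamples D.inD N) ≤
      ENNReal.ofReal (ε * δ) := by
    rw [lintegral_add_left hf1m]
    calc _ ≤ ENNReal.ofReal (T.card * (1 / N)) +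
        ENNReal.ofReal ((N : ℝ) * (C * r ^ γ * r ^ n * vc)) := add_le_add hmiss hGint
      _ ≤ ENNReal.ofReal (ε * δ / 2) + ENNReal.ofReal (ε * δ / 2) :=
          add_le_add (ENNReal.ofReal_le_ofReal KB2') (ENNReal.ofReal_le_ofReal KB1)
      _ = ENNReal.ofReal (ε * δ) := by
          rw [← ENNReal.ofReal_add (by positivity) (by positivity)]
          congr 1
          ring
  set Bad : Set (Fin N → Euc n) := {S | ENNReal.ofReal ε ≤
      D.inD ((⋃ i, Metric.closedBall (S i) r)ᶜ) +
      ∑ i, D.outD (Metric.closedBall (S i) r)} with hBaddef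
  have hBadm : MeasurableSet Bad := measurableSet_le measurable_const (hf1m.add hGm)
  have hmark : iidSamples D.inD N Bad ≤ ENNReal.ofReal δ := by
    calc iidSamples D.inD N Bad
        ≤ (∫⁻ S, (D.inD ((⋃ i, Metric.closedBall (S i) r)ᶜ) +
            ∑ i, D.outD (Metric.closedBall (S i) r)) ∂(iidSamples D.inD N)) /
            ENNReal.ofReal ε :=
          meas_ge_le_lintegral_div (hf1m.add hGm).aemeasurable
            (ENNReal.ofReal_pos.mpr hε).ne' ENNReal.ofReal_ne_top
      _ ≤ ENNReal.ofReal (ε * δ) / ENNReal.ofReal ε := ENNReal.div_le_div_right htotal _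
      _ = ENNReal.ofReal δ := by
          rw [← ENNReal.ofReal_div_of_pos hε]
          congr 1
          rw [mul_comm, mul_div_assoc, div_self hε.ne', mul_one]
  have hsub : Badᶜ ⊆ {S : Fin N → Euc n |
      D.risk α (⋃ i, Metric.closedBall (S i) r) ≤
        (⨅ h' ∈ (Set.univ : Set (Set (Euc n))), D.risk α h') + ENNReal.ofReal ε} := by
    intro S hS
    simp only [hBaddef, mem_compl_iff, mem_setOf_eq, not_le] at hS
    have hrisk : D.risk α (⋃ i, Metric.closedBall (S i) r) ≤
        D.inD ((⋃ i, Metric.closedBall (S i) r)ᶜ) +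
        ∑ i, D.outD (Metric.closedBall (S i) r) := by
      unfold Domain.risk
      refine add_le_add ?_ ?_
      · calc ENNReal.ofReal (1 - α) * D.inD (⋃ i, Metric.closedBall (S i) r)ᶜ
            ≤ 1 * D.inD (⋃ i, Metric.closedBall (S i) r)ᶜ :=
              mul_le_mul' (ENNReal.ofReal_le_one.mpr (by linarith [hα.1])) le_rfl
          _ = _ := one_mul _
      · calc ENNReal.ofReal α * D.outD (⋃ i, Metric.closedBall (S i) r)
            ≤ 1 * ∑ i, D.outD (Metric.closedBall (S i) r) := by
              refine mul_le_mul' (ENNReal.ofReal_le_one.mpr hα.2.le) ?_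
              exact (measure_iUnion_le _).trans_eq (tsum_fintype _)
          _ = _ := one_mul _
    exact mem_setOf_eq ▸ le_trans (hrisk.trans hS.le) le_add_self
  calc ENNReal.ofReal (1 - δ)
      ≤ 1 - ENNReal.ofReal δ := by
        refine ENNReal.le_sub_of_add_le_right ENNReal.ofReal_ne_top ?_
        rw [← ENNReal.ofReal_add (by linarith) hδ.le]
        rw [show 1 - δ + δ = 1 by ring, ENNReal.ofReal_one]
    _ ≤ 1 - iidSamples D.inD N Bad := tsub_le_tsub_left hmark 1
    _ = iidSamples D.inD N Badᶜ := (prob_compl_eq_one_sub hBadm).symm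
    _ ≤ _ := measure_mono hsub
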